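/- Let μ be a composition of m, let e ∈ X_{J(μ)} with e^{-1} w_{J(μ)} = w(t) for a sequence t of type μ, and let d be a prefix of e (i.e. d is obtained as an initial segment of some reduced expression of e, equivalently l(e) = l(d) + l(d^{-1}e)), with d^{-1} w_{J(μ)} = w(t') for t' of type μ. Then μ^♯_i(t) ≤ μ^♯_i(t') for every i, where μ^♯_i denotes the number of good i's. -/

import Mathlib

/- Conventions: `S_m = Equiv.Perm (Fin m)`, 0-based values, positions and symbols.
The paper product `ab` is `b * a` in Mathlib; thus the paper element `e⁻¹ w_{J(μ)}` is
`w0 * e⁻¹` here (`w0 = w_{J(μ)}`, the longest element of the Young subgroup), the paper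
right coset `W_{J(μ)} x` is `{x * u}`, and "`d` is a prefix of `e`", i.e.
`ℓ(e) = ℓ(d) + ℓ(d⁻¹e)`, is `invLen e = invLen d + invLen (e * d⁻¹)`.
Coxeter length = number of inversions. -/

def invLen {m : ℕ} (w : Equiv.Perm (Fin m)) : ℕ :=
  (Finset.univ.filter (fun p : Fin m × Fin m => p.1 < p.2 ∧ w p.2 < w p.1)).card

def inYoung {m : ℕ} (μ : Composition m) (u : Equiv.Perm (Fin m)) : Prop :=
  ∀ i : Fin m, μ.index (u i) = μ.index i

def isMinRep {m : ℕ} (μ : Composition m) (x : Equiv.Perm (Fin m)) : Prop :=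
  ∀ u : Equiv.Perm (Fin m), inYoung μ u → invLen x ≤ invLen (x * u)

def ofTypeL {m : ℕ} (μ : Composition m) (t : List ℕ) : Prop :=
  t.length = m ∧ (∀ a ∈ t, a < μ.length) ∧
    ∀ k : Fin μ.length, t.count (k : ℕ) = μ.blocksFun k

def seqPermVal {m : ℕ} (μ : Composition m) (t : List ℕ) (p : ℕ) : ℕ :=
  μ.sizeUpTo (t.getD p 0 + 1) - 1 - (t.take p).count (t.getD p 0)

/-- `w = w(t)` for the sequence `t` of type `μ`: the occurrences of symbol `k` in `t`,
read left to right, are replaced by the members of the `k`-th block of `μ` in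
decreasing order. -/
def isSeqPerm {m : ℕ} (μ : Composition m) (t : List ℕ) (w : Equiv.Perm (Fin m)) : Prop :=
  ∀ p : Fin m, (w p : ℕ) = seqPermVal μ t (p : ℕ)

def goodStep (g : ℕ → ℕ) (a : ℕ) : ℕ → ℕ :=
  if a = 0 ∨ g a < g (a - 1) then Function.update g a (g a + 1) else g

/-- `goodCounts t s` = number of good `s`'s in `t`; this is `μ♯_s(t)`. -/
def goodCounts (t : List ℕ) : ℕ → ℕ :=
  t.foldl goodStep (fun _ => 0)

namespace Stmt7

open Equiv Finset

variable {m : ℕ}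

lemma invLen_inv (w : Equiv.Perm (Fin m)) : invLen w⁻¹ = invLen w := by
  unfold invLen
  apply Finset.card_bij' (fun p _ => ((w⁻¹ p.2 : Fin m), (w⁻¹ p.1 : Fin m)))
    (fun p _ => ((w p.2 : Fin m), (w p.1 : Fin m)))
  · intro p hp
    simp only [mem_filter, mem_univ, true_and] at hp ⊢
    exact ⟨hp.2, by simpa using hp.1⟩
  · intro p hp
    simp only [mem_filter, mem_univ, true_and] at hp ⊢
    exact ⟨hp.2, by simpa using hp.1⟩
  · intro p hp; simp
  · intro p hp; simp

lemma invLen_mul_le (c d : Equiv.Perm (Fin m)) :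
    invLen (c * d) ≤ invLen c + invLen d := by
  unfold invLen
  have hsub : (Finset.univ.filter (fun p : Fin m × Fin m => p.1 < p.2 ∧ (c*d) p.2 < (c*d) p.1)) ⊆
      (Finset.univ.filter (fun p : Fin m × Fin m => p.1 < p.2 ∧ d p.2 < d p.1)) ∪
      ((Finset.univ.filter (fun p : Fin m × Fin m => p.1 < p.2 ∧ c p.2 < c p.1)).image
        (fun p => if d⁻¹ p.1 < d⁻¹ p.2 then (d⁻¹ p.1, d⁻¹ p.2) else (d⁻¹ p.2, d⁻¹ p.1))) := by
    intro p hp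
    simp only [mem_filter, mem_univ, true_and] at hp; simp only [Equiv.Perm.mul_apply] at hp
    rcases lt_trichotomy (d p.2) (d p.1) with h | h | h
    · exact Finset.mem_union_left _ (by simp [hp.1, h])
    · exact absurd (congrArg c h) (ne_of_lt hp.2)
    · apply Finset.mem_union_right
      apply Finset.mem_image.2
      refine ⟨(d p.1, d p.2), by simp [h, hp.2], ?_⟩
      simp [hp.1, not_lt.2 (le_of_lt hp.1)]
  have h1 := Finset.card_le_card hsub
  have h2 := Finset.card_union_le
      (Finset.univ.filter (fun p : Fin m × Fin m => p.1 < p.2 ∧ d p.2 < d p.1))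
      ((Finset.univ.filter (fun p : Fin m × Fin m => p.1 < p.2 ∧ c p.2 < c p.1)).image
        (fun p => if d⁻¹ p.1 < d⁻¹ p.2 then (d⁻¹ p.1, d⁻¹ p.2) else (d⁻¹ p.2, d⁻¹ p.1)))
  have h3 := Finset.card_image_le (s := (Finset.univ.filter
      (fun p : Fin m × Fin m => p.1 < p.2 ∧ c p.2 < c p.1)))
      (f := (fun p => if d⁻¹ p.1 < d⁻¹ p.2 then (d⁻¹ p.1, d⁻¹ p.2) else (d⁻¹ p.2, d⁻¹ p.1)))
  omega

lemma strictMono_le (f : Fin m → Fin m) (hf : StrictMono f) (p : Fin m) :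
    (p : ℕ) ≤ (f p : ℕ) := by
  have key : ∀ k, ∀ p : Fin m, (p : ℕ) = k → k ≤ (f p : ℕ) := by
    intro k
    induction k with
    | zero => intro p _; exact Nat.zero_le _
    | succ n ih =>
        intro p hp
        have hn : n < m := by omega
        have hlt : (⟨n, hn⟩ : Fin m) < p := by simp [Fin.lt_def]; omega
        have hfl := Fin.lt_def.1 (hf hlt)
        have h2 := ih ⟨n, hn⟩ rfl
        omega
  exact key _ p rfl

lemma perm_eq_one_of_ascend (w : Equiv.Perm (Fin m))
    (h : ∀ j (hj : j + 1 < m), w ⟨j, by omega⟩ < w ⟨j+1, hj⟩) : w = 1 := by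
  have key : ∀ k (p : Fin m) (hk : (p : ℕ) + k + 1 < m), w p < w ⟨(p : ℕ) + k + 1, hk⟩ := by
    intro k
    induction k with
    | zero =>
        intro p hk
        have := h (p : ℕ) (by omega)
        convert this using 3
    | succ n ih =>
        intro p hk
        have h1 : w p < w ⟨(p : ℕ) + n + 1, by omega⟩ := ih p (by omega)
        have h2 := h ((p : ℕ) + n + 1) (by omega)
        have h3 : w ⟨(p : ℕ) + n + 1 + 1, by omega⟩ = w ⟨(p : ℕ) + (n+1) + 1, hk⟩ := by
          congr 1
        exact h1.trans (h3 ▸ h2)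
  have hmono : StrictMono w := by
    intro p q hpq
    have hq : (q : ℕ) = (p : ℕ) + ((q : ℕ) - (p : ℕ) - 1) + 1 := by
      have := Fin.lt_def.1 hpq; omega
    have := key ((q : ℕ) - (p : ℕ) - 1) p (by omega)
    convert this using 3
    rfl
  have hsymm : StrictMono (w.symm) := by
    intro a b hab
    rcases lt_trichotomy (w.symm a) (w.symm b) with h' | h' | h'
    · exact h'
    · exact absurd (congrArg w h') (by simp; exact ne_of_lt hab)
    · have := hmono h'
      simp only [Equiv.apply_symm_apply] at this
      exact absurd hab (not_lt.2 (le_of_lt this))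
  ext p
  have h1 : (p : ℕ) ≤ w p := strictMono_le _ hmono p
  have h2 : (p : ℕ) ≤ w.symm p := strictMono_le _ hsymm p
  have h3 : (w p : ℕ) ≤ p := by
    have := hmono.monotone (show p ≤ w.symm p from h2)
    simpa using this
  have : w p = p := Fin.ext (le_antisymm h3 h1)
  simp [this]

lemma exists_descent (w : Equiv.Perm (Fin m)) (hw : w ≠ 1) :
    ∃ j, ∃ (hj : j + 1 < m), w ⟨j+1, hj⟩ < w ⟨j, by omega⟩ := by
  by_contra hcon
  push_neg at hcon
  apply hw
  apply perm_eq_one_of_ascend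
  intro j hj
  rcases lt_trichotomy (w ⟨j, by omega⟩) (w ⟨j+1, hj⟩) with h | h | h
  · exact h
  · exfalso; exact absurd (w.injective h) (by simp [Fin.ext_iff])
  · exact absurd h (not_lt.2 (hcon j hj))

lemma invLen_eq_zero (w : Equiv.Perm (Fin m)) (h : invLen w = 0) : w = 1 := by
  by_contra hw
  obtain ⟨j, hj, hd⟩ := exists_descent w hw
  have : (⟨⟨j, by omega⟩, ⟨j+1, hj⟩⟩ : Fin m × Fin m) ∈
      (Finset.univ.filter (fun p : Fin m × Fin m => p.1 < p.2 ∧ w p.2 < w p.1)) := by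
    simp only [mem_filter, mem_univ, true_and]
    exact ⟨by simp [Fin.lt_def], hd⟩
  rw [invLen, Finset.card_eq_zero] at h
  simp [h] at this

section
variable (jj j1 : Fin m) (h12 : (j1 : ℕ) = (jj : ℕ) + 1)
include h12

lemma swap_sorts (p q : Fin m) (hpq : p < q) (hne : ¬(p = jj ∧ q = j1)) :
    Equiv.swap jj j1 p < Equiv.swap jj j1 q := by
  rw [Equiv.swap_apply_def, Equiv.swap_apply_def]
  have hpq' := Fin.lt_def.1 hpq
  have hne' : ¬((p : ℕ) = (jj : ℕ) ∧ (q : ℕ) = (j1 : ℕ)) := by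
    intro ⟨a, b⟩; exact hne ⟨Fin.ext a, Fin.ext b⟩
  split_ifs with h1 h2 h3 h4 h5 h6 h7 h8 <;>
    simp only [Fin.lt_def, Fin.ext_iff] at * <;> omega

lemma invLen_mul_swap (w : Equiv.Perm (Fin m)) (h : w jj < w j1) :
    invLen (w * Equiv.swap jj j1) = invLen w + 1 := by
  have hjlt : jj < j1 := by rw [Fin.lt_def]; omega
  have hmem : (jj, j1) ∈ (Finset.univ.filter (fun p : Fin m × Fin m => p.1 < p.2 ∧
      (w * Equiv.swap jj j1) p.2 < (w * Equiv.swap jj j1) p.1)) := by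
    simp only [mem_filter, mem_univ, true_and]; simp only [Equiv.Perm.mul_apply, Equiv.swap_apply_left,
      Equiv.swap_apply_right]
    exact ⟨hjlt, h⟩
  rw [invLen, ← Finset.card_erase_add_one hmem]
  congr 1
  rw [invLen]
  apply Finset.card_bij' (fun p _ => (Equiv.swap jj j1 p.1, Equiv.swap jj j1 p.2))
    (fun p _ => (Equiv.swap jj j1 p.1, Equiv.swap jj j1 p.2))
  · intro p hp
    simp only [Finset.mem_erase, mem_filter, mem_univ, true_and] at hp; simp only [Equiv.Perm.mul_apply] at hp
    obtain ⟨hne, hlt, hinv⟩ := hp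
    have hne' : ¬(p.1 = jj ∧ p.2 = j1) := by
      intro ⟨a, b⟩; apply hne; rw [Prod.ext_iff]; exact ⟨a, b⟩
    simp only [mem_filter, mem_univ, true_and]
    refine ⟨swap_sorts jj j1 h12 p.1 p.2 hlt hne', ?_⟩
    simpa [Equiv.swap_apply_self] using hinv
  · intro p hp
    simp only [mem_filter, mem_univ, true_and] at hp
    obtain ⟨hlt, hinv⟩ := hp
    have hne' : ¬(p.1 = jj ∧ p.2 = j1) := by
      rintro ⟨a, b⟩
      rw [a, b] at hinv
      exact absurd h (not_lt.2 (le_of_lt hinv))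
    simp only [Finset.mem_erase, mem_filter, mem_univ, true_and]; simp only [Equiv.Perm.mul_apply]
    refine ⟨?_, swap_sorts jj j1 h12 p.1 p.2 hlt hne', by simpa [Equiv.swap_apply_self] using hinv⟩
    intro hcon
    rw [Prod.ext_iff] at hcon
    obtain ⟨h1, h2⟩ := hcon
    simp only at h1 h2
    have ha : p.1 = j1 := by
      have := congrArg (Equiv.swap jj j1) h1
      simpa [Equiv.swap_apply_self] using this
    have hb : p.2 = jj := by
      have := congrArg (Equiv.swap jj j1) h2
      simpa [Equiv.swap_apply_self] using this
    rw [ha, hb] at hlt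
    rw [Fin.lt_def] at hlt
    omega
  · intro p hp; simp [Equiv.swap_apply_self]
  · intro p hp; simp [Equiv.swap_apply_self]

lemma invLen_swap_mul (d : Equiv.Perm (Fin m)) (h : d⁻¹ jj < d⁻¹ j1) :
    invLen (Equiv.swap jj j1 * d) = invLen d + 1 := by
  have key : Equiv.swap jj j1 * d = (d⁻¹ * Equiv.swap jj j1)⁻¹ := by
    rw [mul_inv_rev, Equiv.swap_inv, inv_inv]
  rw [key, invLen_inv, invLen_mul_swap jj j1 h12 d⁻¹ h, invLen_inv]

lemma invLen_swap_le : invLen (Equiv.swap jj j1) ≤ 1 := by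
  rw [invLen]
  have hsub : (Finset.univ.filter (fun p : Fin m × Fin m => p.1 < p.2 ∧
      Equiv.swap jj j1 p.2 < Equiv.swap jj j1 p.1)) ⊆ {(jj, j1)} := by
    intro p hp
    simp only [mem_filter, mem_univ, true_and] at hp
    by_contra hcon
    have hne : ¬(p.1 = jj ∧ p.2 = j1) := by
      rintro ⟨a, b⟩
      apply hcon
      simp only [Finset.mem_singleton, Prod.ext_iff]
      exact ⟨a, b⟩
    exact absurd (swap_sorts jj j1 h12 p.1 p.2 hp.1 hne) (not_lt.2 (le_of_lt hp.2))
  calc _ ≤ _ := Finset.card_le_card hsub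
    _ = 1 := Finset.card_singleton _
end

lemma index_eq (μ : Composition m) (i : ℕ) (hi : i < μ.length) (x : Fin m)
    (h1 : μ.sizeUpTo i ≤ (x : ℕ)) (h2 : (x : ℕ) < μ.sizeUpTo (i + 1)) :
    (μ.index x : ℕ) = i := by
  have ha := μ.sizeUpTo_index_le x
  have hb : (x : ℕ) < μ.sizeUpTo ((μ.index x : ℕ) + 1) := by
    simpa using μ.lt_sizeUpTo_index_succ x
  rcases lt_trichotomy ((μ.index x : ℕ)) i with h | h | h
  · have := μ.monotone_sizeUpTo (show (μ.index x : ℕ) + 1 ≤ i by omega)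
    omega
  · exact h
  · have := μ.monotone_sizeUpTo (show i + 1 ≤ (μ.index x : ℕ) by omega)
    omega

lemma index_mono (μ : Composition m) (x y : Fin m) (h : x ≤ y) :
    (μ.index x : ℕ) ≤ (μ.index y : ℕ) := by
  by_contra hcon
  push_neg at hcon
  have h1 := μ.sizeUpTo_index_le x
  have h2 : (y : ℕ) < μ.sizeUpTo ((μ.index y : ℕ) + 1) := by
    simpa using μ.lt_sizeUpTo_index_succ y
  have := μ.monotone_sizeUpTo (show (μ.index y : ℕ) + 1 ≤ (μ.index x : ℕ) by omega)
  have hxy : (x : ℕ) ≤ y := h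
  omega

lemma lt_of_index_lt (μ : Composition m) (x y : Fin m)
    (h : (μ.index x : ℕ) < (μ.index y : ℕ)) : x < y := by
  by_contra hcon
  push_neg at hcon
  exact absurd (index_mono μ y x hcon) (by omega)

def brVal (μ : Composition m) (x : Fin m) : ℕ :=
  μ.sizeUpTo (μ.index x) + μ.sizeUpTo ((μ.index x : ℕ) + 1) - 1 - (x : ℕ)

lemma brVal_bounds (μ : Composition m) (x : Fin m) :
    μ.sizeUpTo (μ.index x) ≤ brVal μ x ∧ brVal μ x < μ.sizeUpTo ((μ.index x : ℕ) + 1)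
      ∧ brVal μ x < m := by
  have h1 := μ.sizeUpTo_index_le x
  have h2 : (x : ℕ) < μ.sizeUpTo ((μ.index x : ℕ) + 1) := by
    simpa using μ.lt_sizeUpTo_index_succ x
  have h3 := μ.sizeUpTo_le ((μ.index x : ℕ) + 1)
  unfold brVal
  omega

def blockRevF (μ : Composition m) (x : Fin m) : Fin m :=
  ⟨brVal μ x, (brVal_bounds μ x).2.2⟩

lemma index_blockRevF (μ : Composition m) (x : Fin m) :
    μ.index (blockRevF μ x) = μ.index x := by
  apply Fin.ext
  exact index_eq μ (μ.index x) (μ.index x).2 _ (brVal_bounds μ x).1 (brVal_bounds μ x).2.1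

lemma blockRevF_invol (μ : Composition m) (x : Fin m) :
    blockRevF μ (blockRevF μ x) = x := by
  apply Fin.ext
  show brVal μ (blockRevF μ x) = x
  have h1 := μ.sizeUpTo_index_le x
  have h2 : (x : ℕ) < μ.sizeUpTo ((μ.index x : ℕ) + 1) := by
    simpa using μ.lt_sizeUpTo_index_succ x
  have hb := brVal_bounds μ x
  unfold brVal
  rw [index_blockRevF]
  have hd : brVal μ x
      = μ.sizeUpTo (μ.index x) + μ.sizeUpTo ((μ.index x : ℕ) + 1) - 1 - (x : ℕ) := rfl
  show μ.sizeUpTo (μ.index x) + μ.sizeUpTo ((μ.index x : ℕ) + 1) - 1 - (blockRevF μ x : ℕ) = x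
  have he : ((blockRevF μ x : Fin m) : ℕ) = brVal μ x := rfl
  omega

def blockRev (μ : Composition m) : Equiv.Perm (Fin m) where
  toFun := blockRevF μ
  invFun := blockRevF μ
  left_inv := blockRevF_invol μ
  right_inv := blockRevF_invol μ

lemma blockRev_apply (μ : Composition m) (x : Fin m) :
    ((blockRev μ x : Fin m) : ℕ)
      = μ.sizeUpTo (μ.index x) + μ.sizeUpTo ((μ.index x : ℕ) + 1) - 1 - (x : ℕ) := rfl

lemma blockRev_inYoung (μ : Composition m) : inYoung μ (blockRev μ) :=
  fun x => index_blockRevF μ x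

lemma blockRev_antitone (μ : Composition m) (p q : Fin m) (hpq : p < q)
    (hidx : μ.index p = μ.index q) : blockRev μ q < blockRev μ p := by
  rw [Fin.lt_def]
  rw [blockRev_apply, blockRev_apply, hidx]
  have h1 := μ.sizeUpTo_index_le q
  have h2 : (q : ℕ) < μ.sizeUpTo ((μ.index q : ℕ) + 1) := by
    simpa using μ.lt_sizeUpTo_index_succ q
  have h3 := μ.sizeUpTo_index_le p
  have hpq' := Fin.lt_def.1 hpq
  rw [hidx] at h3
  omega

lemma young_inv_same_block (μ : Composition m) (u : Equiv.Perm (Fin m)) (hu : inYoung μ u)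
    (p q : Fin m) (hpq : p < q) (hinv : u q < u p) : μ.index p = μ.index q := by
  have h1 : (μ.index p : ℕ) ≤ μ.index q := index_mono μ p q (le_of_lt hpq)
  have h2 : (μ.index (u q) : ℕ) ≤ μ.index (u p) := index_mono μ (u q) (u p) (le_of_lt hinv)
  rw [hu p, hu q] at h2
  apply Fin.ext
  omega

/-- The longest element of the Young subgroup is the block reversal. -/
lemma w0_eq_blockRev (μ : Composition m) (w0 : Equiv.Perm (Fin m)) (hw0 : inYoung μ w0)
    (hw0max : ∀ u, inYoung μ u → invLen u ≤ invLen w0) : w0 = blockRev μ := by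
  set P := (Finset.univ.filter (fun p : Fin m × Fin m =>
      p.1 < p.2 ∧ μ.index p.1 = μ.index p.2)) with hP
  have hIr : (Finset.univ.filter (fun p : Fin m × Fin m =>
      p.1 < p.2 ∧ blockRev μ p.2 < blockRev μ p.1)) = P := by
    apply Finset.ext
    intro p
    simp only [hP, Finset.mem_filter, Finset.mem_univ, true_and, and_congr_right_iff]
    intro hlt
    constructor
    · intro hinv; exact young_inv_same_block μ _ (blockRev_inYoung μ) p.1 p.2 hlt hinv
    · intro hidx; exact blockRev_antitone μ p.1 p.2 hlt hidx
  have hIw0sub : (Finset.univ.filter (fun p : Fin m × Fin m =>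
      p.1 < p.2 ∧ w0 p.2 < w0 p.1)) ⊆ P := by
    intro p hp
    simp only [Finset.mem_filter, Finset.mem_univ, true_and] at hp
    simp only [hP, Finset.mem_filter, Finset.mem_univ, true_and]
    exact ⟨hp.1, young_inv_same_block μ w0 hw0 p.1 p.2 hp.1 hp.2⟩
  have hcard : P.card ≤ (Finset.univ.filter (fun p : Fin m × Fin m =>
      p.1 < p.2 ∧ w0 p.2 < w0 p.1)).card := by
    rw [← hIr]
    exact hw0max (blockRev μ) (blockRev_inYoung μ)
  have hIw0 : (Finset.univ.filter (fun p : Fin m × Fin m =>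
      p.1 < p.2 ∧ w0 p.2 < w0 p.1)) = P :=
    Finset.eq_of_subset_of_card_le hIw0sub hcard
  -- now show blockRev μ * w0 = 1
  have hkey : blockRev μ * w0 = 1 := by
    apply perm_eq_one_of_ascend
    intro j hj
    set jj : Fin m := ⟨j, by omega⟩
    set j1 : Fin m := ⟨j+1, hj⟩
    have hjlt : jj < j1 := by simp [jj, j1, Fin.lt_def]
    simp only [Equiv.Perm.mul_apply]
    by_cases hidx : μ.index jj = μ.index j1
    · have hmem : (jj, j1) ∈ P := by
        simp only [hP, Finset.mem_filter, Finset.mem_univ, true_and]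
        exact ⟨hjlt, hidx⟩
      rw [← hIw0] at hmem
      simp only [Finset.mem_filter, Finset.mem_univ, true_and] at hmem
      apply blockRev_antitone μ (w0 j1) (w0 jj) hmem.2
      rw [hw0 j1, hw0 jj, hidx]
    · have hidx' : (μ.index jj : ℕ) < μ.index j1 := by
        have := index_mono μ jj j1 (le_of_lt hjlt)
        have : (μ.index jj : ℕ) ≠ (μ.index j1 : ℕ) := fun hc => hidx (Fin.ext hc)
        omega
      apply lt_of_index_lt μ
      rw [blockRev_inYoung μ (w0 jj), blockRev_inYoung μ (w0 j1), hw0 jj, hw0 j1]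
      exact hidx'
  have hinv : w0 = (blockRev μ)⁻¹ := eq_inv_of_mul_eq_one_right hkey
  rw [hinv]
  ext x
  simp only [Equiv.Perm.inv_def]
  have hsx : (blockRev μ).symm x = blockRev μ x := by
    rw [Equiv.symm_apply_eq]
    exact (blockRevF_invol μ x).symm
  rw [hsx]

lemma count_take_lt (t : List ℕ) (p : ℕ) (hp : p < t.length) :
    (t.take p).count (t.getD p 0) < t.count (t.getD p 0) := by
  set a := t.getD p 0 with ha
  conv_rhs => rw [← List.take_append_drop p t]
  rw [List.count_append]
  have hdrop : t.drop p = t[p] :: t.drop (p + 1) := List.drop_eq_getElem_cons hp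
  have hmem : a ∈ t.drop p := by
    rw [hdrop, ha, List.getD_eq_getElem t 0 hp]
    exact List.mem_cons_self
  have : 0 < (t.drop p).count a := List.count_pos_iff.2 hmem
  omega

lemma ofType_getD_lt (μ : Composition m) (t : List ℕ) (ht : ofTypeL μ t) (p : ℕ)
    (hp : p < m) : t.getD p 0 < μ.length := by
  apply ht.2.1
  rw [List.getD_eq_getElem t 0 (by rw [ht.1]; exact hp)]
  exact List.getElem_mem _

lemma ofType_count_take_lt (μ : Composition m) (t : List ℕ) (ht : ofTypeL μ t) (p : ℕ)
    (hp : p < m) :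
    (t.take p).count (t.getD p 0)
      < μ.blocksFun ⟨t.getD p 0, ofType_getD_lt μ t ht p hp⟩ := by
  have h1 := count_take_lt t p (by rw [ht.1]; exact hp)
  have h2 := ht.2.2 ⟨t.getD p 0, ofType_getD_lt μ t ht p hp⟩
  simp only at h2
  omega

/-- The key dictionary: if `blockRev μ * e⁻¹ = w(t)` then
`e⁻¹ p = sizeUpTo (t p) + (number of previous occurrences of `t p`)`. -/
lemma word_formula (μ : Composition m) (t : List ℕ) (e : Equiv.Perm (Fin m))
    (ht : ofTypeL μ t) (hseq : isSeqPerm μ t (blockRev μ * e⁻¹)) (p : Fin m) :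
    ((e⁻¹ p : Fin m) : ℕ) = μ.sizeUpTo (t.getD (p : ℕ) 0)
        + (t.take (p : ℕ)).count (t.getD (p : ℕ) 0)
      ∧ (μ.index (e⁻¹ p) : ℕ) = t.getD (p : ℕ) 0 := by
  set a := t.getD (p : ℕ) 0 with ha
  have haμ : a < μ.length := ofType_getD_lt μ t ht p p.2
  set cnt := (t.take (p : ℕ)).count a with hcnt
  have hcnt_lt : cnt < μ.blocksFun ⟨a, haμ⟩ := ofType_count_take_lt μ t ht p p.2
  have hsucc : μ.sizeUpTo (a + 1) = μ.sizeUpTo a + μ.blocksFun ⟨a, haμ⟩ :=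
    μ.sizeUpTo_succ haμ
  have hval := hseq p
  rw [Equiv.Perm.mul_apply] at hval
  unfold seqPermVal at hval
  rw [← ha, ← hcnt] at hval
  rw [blockRev_apply] at hval
  -- index of the image value equals a
  have hidximg : (μ.index (blockRev μ (e⁻¹ p)) : ℕ) = a := by
    apply index_eq μ a haμ
    · rw [blockRev_apply]
      have h1 := μ.sizeUpTo_index_le (e⁻¹ p)
      have h2 : ((e⁻¹ p : Fin m) : ℕ) < μ.sizeUpTo ((μ.index (e⁻¹ p) : ℕ) + 1) := by
        simpa using μ.lt_sizeUpTo_index_succ (e⁻¹ p)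
      rw [hval]
      omega
    · rw [blockRev_apply, hval]; omega
  have hidx : (μ.index (e⁻¹ p) : ℕ) = a := by
    rw [← hidximg, blockRev_inYoung μ (e⁻¹ p)]
  refine ⟨?_, hidx⟩
  have h1 := μ.sizeUpTo_index_le (e⁻¹ p)
  have h2 : ((e⁻¹ p : Fin m) : ℕ) < μ.sizeUpTo ((μ.index (e⁻¹ p) : ℕ) + 1) := by
    simpa using μ.lt_sizeUpTo_index_succ (e⁻¹ p)
  rw [hidx] at h1 h2
  rw [hidx] at hval
  omega

lemma block_decomp_unique (μ : Composition m) (a b s s' : ℕ)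
    (ha : a < μ.length) (hb : b < μ.length)
    (hs : s < μ.blocksFun ⟨a, ha⟩) (hs' : s' < μ.blocksFun ⟨b, hb⟩)
    (heq : μ.sizeUpTo a + s = μ.sizeUpTo b + s') : a = b ∧ s = s' := by
  have hsa : μ.sizeUpTo (a + 1) = μ.sizeUpTo a + μ.blocksFun ⟨a, ha⟩ := μ.sizeUpTo_succ ha
  have hsb : μ.sizeUpTo (b + 1) = μ.sizeUpTo b + μ.blocksFun ⟨b, hb⟩ := μ.sizeUpTo_succ hb
  rcases lt_trichotomy a b with h | h | h
  · have := μ.monotone_sizeUpTo (show a + 1 ≤ b by omega)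
    omega
  · subst h; omega
  · have := μ.monotone_sizeUpTo (show b + 1 ≤ a by omega)
    omega

/-- Two sequences of type `μ` defining the same permutation are equal. -/
lemma word_unique (μ : Composition m) (t t₁ : List ℕ) (ht : ofTypeL μ t)
    (ht₁ : ofTypeL μ t₁) (h : ∀ p : Fin m, seqPermVal μ t (p : ℕ) = seqPermVal μ t₁ (p : ℕ)) :
    t = t₁ := by
  have hlen : t.length = t₁.length := by rw [ht.1, ht₁.1]
  have key : ∀ p, p ≤ m → t.take p = t₁.take p := by
    intro p
    induction p with
    | zero => intro _; simp
    | succ n ih =>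
        intro hn
        have htake := ih (by omega)
        have hnm : n < m := by omega
        have hnt : n < t.length := by rw [ht.1]; exact hnm
        have hnt₁ : n < t₁.length := by rw [ht₁.1]; exact hnm
        rw [List.take_succ, List.take_succ, htake]
        congr 1
        -- show the n-th entries agree
        have hv := h ⟨n, hnm⟩
        unfold seqPermVal at hv
        simp only at hv
        set a := t.getD n 0 with hA
        set b := t₁.getD n 0 with hB
        have haμ : a < μ.length := ofType_getD_lt μ t ht n hnm
        have hbμ : b < μ.length := ofType_getD_lt μ t₁ ht₁ n hnm
        have hcnta : (t.take n).count a < μ.blocksFun ⟨a, haμ⟩ :=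
          ofType_count_take_lt μ t ht n hnm
        have hcntb : (t₁.take n).count b < μ.blocksFun ⟨b, hbμ⟩ :=
          ofType_count_take_lt μ t₁ ht₁ n hnm
        have hsa : μ.sizeUpTo (a + 1) = μ.sizeUpTo a + μ.blocksFun ⟨a, haμ⟩ := μ.sizeUpTo_succ haμ
        have hsb : μ.sizeUpTo (b + 1) = μ.sizeUpTo b + μ.blocksFun ⟨b, hbμ⟩ := μ.sizeUpTo_succ hbμ
        have hcntb' : (t.take n).count b = (t₁.take n).count b := by rw [htake]
        have heq : μ.sizeUpTo a + (μ.blocksFun ⟨a, haμ⟩ - 1 - (t.take n).count a)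
            = μ.sizeUpTo b + (μ.blocksFun ⟨b, hbμ⟩ - 1 - (t₁.take n).count b) := by
          omega
        have hab := block_decomp_unique μ a b _ _ haμ hbμ (by omega) (by omega) heq
        have : a = b := hab.1
        rw [List.getElem?_eq_getElem hnt, List.getElem?_eq_getElem hnt₁]
        rw [← List.getD_eq_getElem t 0 hnt, ← List.getD_eq_getElem t₁ 0 hnt₁]
        rw [← hA, ← hB, this]
  have := key m le_rfl
  rwa [List.take_of_length_le (le_of_eq ht.1), List.take_of_length_le (le_of_eq ht₁.1)] at this

lemma goodStep_apply (g : ℕ → ℕ) (a x : ℕ) :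
    goodStep g a x = if (a = 0 ∨ g a < g (a - 1)) ∧ x = a then g x + 1 else g x := by
  unfold goodStep
  split_ifs with h1 h2 h3
  · rw [h2.2]; simp [Function.update]
  · rw [Function.update]; simp only
    split_ifs with h4
    · exact absurd ⟨h1, h4⟩ h2
    · rfl
  · exact absurd h3.1 h1
  · rfl

lemma goodStep_mono (g₁ g₂ : ℕ → ℕ) (h : ∀ x, g₁ x ≤ g₂ x) (a : ℕ) :
    ∀ x, goodStep g₁ a x ≤ goodStep g₂ a x := by
  intro x
  rw [goodStep_apply, goodStep_apply]
  split_ifs with h1 h2 h2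
  · exact Nat.add_le_add (h x) le_rfl
  · -- g₁ increments, g₂ doesn't
    obtain ⟨hc, hx⟩ := h1
    rcases hc with hc | hc
    · exact absurd ⟨Or.inl hc, hx⟩ h2
    · -- a ≠ 0 (else h2 contradiction), and g₂ a ≥ g₂ (a-1)
      by_cases ha : a = 0
      · exact absurd ⟨Or.inl ha, hx⟩ h2
      · have h2' : ¬ g₂ a < g₂ (a - 1) := fun hcon => h2 ⟨Or.inr hcon, hx⟩
        have : g₁ a < g₂ a := lt_of_lt_of_le (lt_of_lt_of_le hc (h (a-1))) (not_lt.1 h2')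
        subst hx
        omega
  · exact le_trans (h x) (Nat.le_succ _)
  · exact h x

lemma foldl_goodStep_mono (B : List ℕ) (g₁ g₂ : ℕ → ℕ) (h : ∀ x, g₁ x ≤ g₂ x) :
    ∀ x, B.foldl goodStep g₁ x ≤ B.foldl goodStep g₂ x := by
  induction B generalizing g₁ g₂ with
  | nil => exact h
  | cons b B ih =>
      intro x
      simp only [List.foldl_cons]
      exact ih _ _ (goodStep_mono g₁ g₂ h b) x

lemma gs_ne (g : ℕ → ℕ) (a x : ℕ) (h : x ≠ a) : goodStep g a x = g x := by
  unfold goodStep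
  split_ifs with h1
  · simp [Function.update, h]
  · rfl

lemma gs_self (g : ℕ → ℕ) (a : ℕ) :
    goodStep g a a = if a = 0 ∨ g a < g (a - 1) then g a + 1 else g a := by
  unfold goodStep
  split_ifs with h1 <;> simp [Function.update]

/-- The two-letter swap inequality: if `a < b`, processing `b` then `a` yields
pointwise no more than processing `a` then `b`. -/
lemma goodStep_swap (g : ℕ → ℕ) (a b : ℕ) (hab : a < b) :
    ∀ x, goodStep (goodStep g b) a x ≤ goodStep (goodStep g a) b x := by
  intro x
  set g' := goodStep g b with hg'
  set h' := goodStep g a with hh'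
  have hga : g' a = g a := gs_ne g b a (by omega)
  have hga1 : g' (a - 1) = g (a - 1) := gs_ne g b (a-1) (by omega)
  have hhb : h' b = g b := gs_ne g a b (by omega)
  by_cases hx : x = a
  · rw [hx]
    have hL : goodStep g' a a = if a = 0 ∨ g a < g (a - 1) then g a + 1 else g a := by
      rw [gs_self, hga, hga1]
    have hR : goodStep h' b a = h' a := gs_ne h' b a (by omega)
    rw [hL, hR, hh', gs_self]
  · by_cases hx' : x = b
    · rw [hx']
      have hL : goodStep g' a b = g' b := gs_ne g' a b (by omega)
      have hR : goodStep h' b b = if b = 0 ∨ h' b < h' (b - 1) then h' b + 1 else h' b :=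
        gs_self h' b
      rw [hL, hR, hg', gs_self, hhb]
      by_cases hb1 : b = a + 1
      · -- h' (b-1) = h' a ≥ g a
        have hba : b - 1 = a := by omega
        have hha : g a ≤ h' (b - 1) := by
          rw [hba, hh', gs_self]
          split_ifs <;> omega
        split_ifs with h1 h2 h2 <;> try omega
        · -- g b < g (b-1) = g a but ¬ (g b < h'(b-1)): fine since ≤ direction
          exfalso
          rcases h1 with h1 | h1
          · exact h2 (Or.inl h1)
          · apply h2
            right
            rw [hba] at h1 ⊢
            calc g b < g a := h1
              _ ≤ h' a := by rw [hba] at hha; exact hha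
      · have hbb : h' (b - 1) = g (b - 1) := gs_ne g a (b-1) (by omega)
        rw [hbb]
    · have hL : goodStep g' a x = g' x := gs_ne g' a x hx
      have hR : goodStep h' b x = h' x := gs_ne h' b x hx'
      have h1 : g' x = g x := gs_ne g b x hx'
      have h2 : h' x = g x := gs_ne g a x hx
      omega

lemma goodCounts_swap (A B : List ℕ) (a b : ℕ) (hab : a < b) :
    ∀ x, goodCounts (A ++ b :: a :: B) x ≤ goodCounts (A ++ a :: b :: B) x := by
  intro x
  unfold goodCounts
  rw [List.foldl_append, List.foldl_append]
  simp only [List.foldl_cons]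
  exact foldl_goodStep_mono B _ _ (goodStep_swap _ a b hab) x

lemma count_swap_prefix (a b x : ℕ) (A T : List ℕ) :
    (A ++ b :: a :: T).count x = (A ++ a :: b :: T).count x := by
  simp only [List.count_append, List.count_cons]
  omega

lemma seqPermVal_swap (μ : Composition m) (A B : List ℕ) (a b : ℕ) (hab : a ≠ b) (p : ℕ) :
    seqPermVal μ (A ++ b :: a :: B) p
      = seqPermVal μ (A ++ a :: b :: B)
          (if p = A.length then A.length + 1 else if p = A.length + 1 then A.length else p) := by
  set j := A.length with hj
  unfold seqPermVal
  rcases lt_trichotomy p j with hp | hp | hp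
  · -- p < j
    rw [if_neg (by omega), if_neg (by omega)]
    rw [List.getD_append _ _ _ _ (by omega), List.getD_append _ _ _ _ (by omega)]
    rw [List.take_append, List.take_append]
    rw [show p - A.length = 0 by omega]
    simp
  · -- p = j
    subst hp
    rw [if_pos rfl]
    rw [List.getD_append_right _ _ _ _ (le_refl _), List.getD_append_right _ _ _ _ (by omega)]
    rw [Nat.sub_self, show j + 1 - A.length = 1 by omega]
    simp only [List.getD_cons_zero, List.getD_cons_succ]
    rw [List.take_append, List.take_append]
    rw [Nat.sub_self, show j + 1 - A.length = 1 by omega]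
    rw [show List.take j A = A from List.take_length (l := A)]
    rw [List.take_of_length_le (show A.length ≤ j + 1 by omega)]
    simp only [List.take_zero, List.take_succ_cons, List.take_nil, List.append_nil,
      List.count_append, List.count_cons, List.count_nil]
    simp [hab, Ne.symm hab]
  · -- p > j
    rw [if_neg (by omega)]
    by_cases hp1 : p = j + 1
    · subst hp1
      rw [if_pos rfl]
      rw [List.getD_append_right _ _ _ _ (by omega), List.getD_append_right _ _ _ _ (le_refl _)]
      rw [show j + 1 - A.length = 1 by omega, Nat.sub_self]
      simp only [List.getD_cons_zero, List.getD_cons_succ]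
      rw [List.take_append, List.take_append]
      rw [show j + 1 - A.length = 1 by omega, Nat.sub_self]
      rw [show List.take j A = A from List.take_length (l := A)]
      rw [List.take_of_length_le (show A.length ≤ j + 1 by omega)]
      simp only [List.take_zero, List.take_succ_cons, List.take_nil, List.append_nil,
        List.count_append, List.count_cons, List.count_nil]
      simp [hab, Ne.symm hab]
    · rw [if_neg hp1]
      obtain ⟨k, rfl⟩ : ∃ k, p = j + (k + 2) := ⟨p - j - 2, by omega⟩
      rw [List.getD_append_right _ _ _ _ (by omega), List.getD_append_right _ _ _ _ (by omega)]
      rw [show j + (k + 2) - A.length = k + 2 by omega]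
      simp only [List.getD_cons_succ]
      rw [List.take_append, List.take_append]
      rw [show j + (k + 2) - A.length = k + 2 by omega]
      simp only [List.take_succ_cons]
      rw [count_swap_prefix]


end Stmt7

set_option maxHeartbeats 1600000 in
/-- if `e ∈ X_{J(μ)}` with `e⁻¹w_{J(μ)} = w(t)`, and `d` is a prefix of `e`
with `d⁻¹w_{J(μ)} = w(t')`, then `μ♯_i(t) ≤ μ♯_i(t')` for every `i`. -/
theorem stmt7 (m : ℕ) (μ : Composition m) (w0 e d : Equiv.Perm (Fin m))
    (hw0 : inYoung μ w0) (hw0max : ∀ u, inYoung μ u → invLen u ≤ invLen w0)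
    (he : isMinRep μ e)
    (hpre : invLen e = invLen d + invLen (e * d⁻¹))
    (t t' : List ℕ)
    (ht : ofTypeL μ t) (htw : isSeqPerm μ t (w0 * e⁻¹))
    (ht' : ofTypeL μ t') (ht'w : isSeqPerm μ t' (w0 * d⁻¹)) :
    ∀ i : ℕ, goodCounts t i ≤ goodCounts t' i := by
  open Stmt7 in
  have hw0r : w0 = blockRev μ := w0_eq_blockRev μ w0 hw0 hw0max
  rw [hw0r] at htw ht'w
  clear hw0 hw0max he hw0r
  suffices H : ∀ n (d : Equiv.Perm (Fin m)) (t' : List ℕ),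
      invLen (e * d⁻¹) = n →
      invLen e = invLen d + invLen (e * d⁻¹) →
      ofTypeL μ t' → isSeqPerm μ t' (blockRev μ * d⁻¹) →
      ∀ i : ℕ, goodCounts t i ≤ goodCounts t' i by
    exact H _ d t' rfl hpre ht' ht'w
  clear hpre ht' ht'w d t'
  intro n
  induction n using Nat.strong_induction_on with
  | _ n ih =>
  intro d t' hn hpre ht' ht'w
  by_cases hed : e * d⁻¹ = 1
  · have hde : d = e := (mul_inv_eq_one.1 hed).symm
    subst hde
    have htt : t = t' := word_unique μ t t' ht ht' (fun p => by rw [← htw p, ← ht'w p])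
    rw [htt]
    intro i; exact le_rfl
  · obtain ⟨j, hj, hdesc⟩ := exists_descent (e * d⁻¹) hed
    set jj : Fin m := ⟨j, by omega⟩ with hjj
    set j1 : Fin m := ⟨j + 1, hj⟩ with hj1
    have h12 : (j1 : ℕ) = (jj : ℕ) + 1 := rfl
    set σ := Equiv.swap jj j1 with hσ
    set d₁ := σ * d with hd₁
    have hσinv : σ⁻¹ = σ := by rw [hσ]; exact Equiv.swap_inv jj j1
    have hd₁inv : d₁⁻¹ = d⁻¹ * σ := by rw [hd₁, mul_inv_rev, hσinv]
    have hcσ : e * d₁⁻¹ = (e * d⁻¹) * σ := by rw [hd₁inv, ← mul_assoc]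
    have hσσ : σ * σ = 1 := by rw [hσ]; exact Equiv.swap_mul_self jj j1
    -- length bookkeeping
    have hc'lt : ((e * d⁻¹) * σ) jj < ((e * d⁻¹) * σ) j1 := by
      have e1 : ((e * d⁻¹) * σ) jj = (e * d⁻¹) j1 := by
        rw [Equiv.Perm.mul_apply, hσ, Equiv.swap_apply_left]
      have e2 : ((e * d⁻¹) * σ) j1 = (e * d⁻¹) jj := by
        rw [Equiv.Perm.mul_apply, hσ, Equiv.swap_apply_right]
      rw [e1, e2]
      exact hdesc
    have hlc : invLen (e * d⁻¹) = invLen ((e * d⁻¹) * σ) + 1 := by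
      have h := invLen_mul_swap jj j1 h12 ((e * d⁻¹) * σ) hc'lt
      rwa [mul_assoc, hσσ, mul_one] at h
    have hd1le : invLen d₁ ≤ invLen d + 1 := by
      have h1 := invLen_mul_le σ d
      have h2 := invLen_swap_le jj j1 h12
      rw [← hσ] at h2
      rw [← hd₁] at h1
      omega
    have heq2 : ((e * d⁻¹) * σ) * d₁ = e := by
      rw [← hcσ, inv_mul_cancel_right]
    have hle : invLen e ≤ invLen ((e * d⁻¹) * σ) + invLen d₁ := by
      conv_lhs => rw [← heq2]
      exact invLen_mul_le _ _
    have hpre' : invLen e = invLen d₁ + invLen (e * d₁⁻¹) := by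
      rw [hcσ]; omega
    have hd1len : invLen d₁ = invLen d + 1 := by
      rw [hcσ] at hpre'
      omega
    -- d⁻¹ is increasing at (j, j+1)
    have hne_j : jj ≠ j1 := by
      rw [hjj, hj1]
      intro hcon
      have := congrArg Fin.val hcon
      simp at this
    have hdlt : d⁻¹ jj < d⁻¹ j1 := by
      rcases lt_trichotomy (d⁻¹ jj) (d⁻¹ j1) with h | h | h
      · exact h
      · exfalso
        apply hne_j
        have := congrArg d h
        simpa using this
      · exfalso
        have hd₁d : d₁⁻¹ jj < d₁⁻¹ j1 := by
          have e1 : d₁⁻¹ jj = d⁻¹ j1 := by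
            rw [hd₁inv, Equiv.Perm.mul_apply, hσ, Equiv.swap_apply_left]
          have e2 : d₁⁻¹ j1 = d⁻¹ jj := by
            rw [hd₁inv, Equiv.Perm.mul_apply, hσ, Equiv.swap_apply_right]
          rw [e1, e2]
          exact h
        have h2 := invLen_swap_mul jj j1 h12 d₁ hd₁d
        have hσd₁ : σ * d₁ = d := by rw [hd₁, ← mul_assoc, hσσ, one_mul]
        rw [hσd₁] at h2
        omega
    -- the word decomposition around positions j, j+1
    have hjm : j < m := by omega
    have hlen' : t'.length = m := ht'.1
    set A := t'.take j with hA
    set Bl := t'.drop (j+2) with hBl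
    set a := t'.getD j 0 with ha
    set b := t'.getD (j+1) 0 with hb
    have hAlen : A.length = j := by rw [hA, List.length_take]; omega
    have hsplit : A ++ a :: b :: Bl = t' := by
      have h1 : t'.drop (j+1) = t'[j+1] :: t'.drop (j+2) :=
        List.drop_eq_getElem_cons (by omega)
      have h2 : t'.drop j = t'[j] :: t'.drop (j+1) := List.drop_eq_getElem_cons (by omega)
      have hlt1 : j < t'.length := by omega
      have hlt2 : j + 1 < t'.length := by omega
      have ha' : a = t'[j] := by rw [ha]; exact List.getD_eq_getElem t' 0 hlt1
      have hb' : b = t'[j+1] := by rw [hb]; exact List.getD_eq_getElem t' 0 hlt2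
      rw [hA, hBl, ha', hb', ← h1, ← h2, List.take_append_drop]
    have htake1 : t'.take (j+1) = A ++ [a] := by
      conv_lhs => rw [← hsplit]
      rw [List.take_append, hAlen,
        List.take_of_length_le (show A.length ≤ j + 1 by omega),
        show j + 1 - j = 1 by omega]
      simp
    -- symbol bounds
    have haμ : a < μ.length := ofType_getD_lt μ t' ht' j hjm
    have hbμ : b < μ.length := ofType_getD_lt μ t' ht' (j+1) (by omega)
    have hcnta : (t'.take j).count a < μ.blocksFun ⟨a, haμ⟩ :=
      ofType_count_take_lt μ t' ht' j hjm
    have hcntb : (t'.take (j+1)).count b < μ.blocksFun ⟨b, hbμ⟩ :=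
      ofType_count_take_lt μ t' ht' (j+1) (by omega)
    -- the word formula for d at the two positions
    have hjjv : (jj : ℕ) = j := rfl
    have hj1v : (j1 : ℕ) = j + 1 := rfl
    have wfd1 := word_formula μ t' d ht' ht'w jj
    have wfd2 := word_formula μ t' d ht' ht'w j1
    rw [hjjv, ← ha] at wfd1
    rw [hj1v, ← hb] at wfd2
    -- a ≠ b via the e-side argument
    have hane : a ≠ b := by
      intro hab
      have hcnt1 : (t'.take (j+1)).count b = (t'.take j).count a + 1 := by
        rw [htake1, ← hab, List.count_append, hA]
        simp
      set q1 := (e * d⁻¹) jj with hq1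
      set q2 := (e * d⁻¹) j1 with hq2
      have hq1e : e⁻¹ q1 = d⁻¹ jj := by rw [hq1]; simp
      have hq2e : e⁻¹ q2 = d⁻¹ j1 := by rw [hq2]; simp
      have wfe1 := word_formula μ t e ht htw q1
      have wfe2 := word_formula μ t e ht htw q2
      rw [hq1e] at wfe1
      rw [hq2e] at wfe2
      have ha1μ : t.getD (q1 : ℕ) 0 < μ.length := ofType_getD_lt μ t ht _ q1.2
      have ha2μ : t.getD (q2 : ℕ) 0 < μ.length := ofType_getD_lt μ t ht _ q2.2
      have hs1 : (t.take (q1 : ℕ)).count (t.getD (q1 : ℕ) 0)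
          < μ.blocksFun ⟨t.getD (q1 : ℕ) 0, ha1μ⟩ := ofType_count_take_lt μ t ht _ q1.2
      have hs2 : (t.take (q2 : ℕ)).count (t.getD (q2 : ℕ) 0)
          < μ.blocksFun ⟨t.getD (q2 : ℕ) 0, ha2μ⟩ := ofType_count_take_lt μ t ht _ q2.2
      have hfin : (⟨a, haμ⟩ : Fin μ.length) = ⟨b, hbμ⟩ := Fin.ext hab
      have hP2 : ((d⁻¹ j1 : Fin m) : ℕ)
          = μ.sizeUpTo a + ((t'.take j).count a + 1) := by
        rw [wfd2.1, hcnt1, ← hab]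
      have hP1 : ((d⁻¹ jj : Fin m) : ℕ) = μ.sizeUpTo a + (t'.take j).count a := wfd1.1
      have hcA1 : (t'.take j).count a + 1 < μ.blocksFun ⟨a, haμ⟩ := by
        rw [hfin, ← hcnt1]
        exact hcntb
      have hdec1 := block_decomp_unique μ (t.getD (q1 : ℕ) 0) a
        ((t.take (q1 : ℕ)).count (t.getD (q1 : ℕ) 0)) ((t'.take j).count a)
        ha1μ haμ hs1 hcnta (by rw [← wfe1.1, hP1])
      have hdec2 := block_decomp_unique μ (t.getD (q2 : ℕ) 0) a
        ((t.take (q2 : ℕ)).count (t.getD (q2 : ℕ) 0)) ((t'.take j).count a + 1)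
        ha2μ haμ hs2 hcA1 (by rw [← wfe2.1, hP2])
      obtain ⟨hd1a, hd1c⟩ := hdec1
      obtain ⟨hd2a, hd2c⟩ := hdec2
      rw [hd1a] at hd1c
      rw [hd2a] at hd2c
      have hq21 : (q2 : ℕ) < (q1 : ℕ) := hdesc
      have hpref : t.take (q2 : ℕ) <+: t.take (q1 : ℕ) := by
        rw [List.prefix_take_iff]
        exact ⟨List.take_prefix _ _, by simp [List.length_take]; omega⟩
      have hcle : (t.take (q2 : ℕ)).count a ≤ (t.take (q1 : ℕ)).count a :=
        hpref.sublist.count_le a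
      rw [hd1c, hd2c] at hcle
      omega
    -- a < b thanks to hdlt
    have haltb : a < b := by
      rcases lt_trichotomy a b with h | h | h
      · exact h
      · exact absurd h hane
      · exfalso
        have hmono := μ.monotone_sizeUpTo (show b + 1 ≤ a by omega)
        have hsb : μ.sizeUpTo (b+1) = μ.sizeUpTo b + μ.blocksFun ⟨b, hbμ⟩ := μ.sizeUpTo_succ hbμ
        have hvlt := Fin.lt_def.1 hdlt
        rw [wfd1.1, wfd2.1] at hvlt
        omega
    -- the swapped word
    set t₁ := A ++ b :: a :: Bl with ht₁def
    have hperm : t₁.Perm t' := by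
      rw [← hsplit, ht₁def]
      exact List.Perm.append_left A (List.Perm.swap a b Bl)
    have ht₁type : ofTypeL μ t₁ :=
      ⟨by rw [hperm.length_eq, hlen'],
       fun x hx => ht'.2.1 x (hperm.mem_iff.1 hx),
       fun k => by rw [hperm.count_eq]; exact ht'.2.2 k⟩
    have ht₁w : isSeqPerm μ t₁ (blockRev μ * d₁⁻¹) := by
      intro p
      have hval : (blockRev μ * d₁⁻¹) p = (blockRev μ * d⁻¹) (σ p) := by
        rw [hd₁inv, ← mul_assoc]
        rfl
      rw [hval, ht'w (σ p)]
      have hswap := seqPermVal_swap μ A Bl a b hane (p : ℕ)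
      rw [hsplit, ← ht₁def, hAlen] at hswap
      rw [hswap]
      congr 1
      by_cases hpj : p = jj
      · rw [hpj, hσ, Equiv.swap_apply_left, hj1v, hjjv, if_pos rfl]
      · by_cases hpj1 : p = j1
        · rw [hpj1, hσ, Equiv.swap_apply_right, hjjv, hj1v, if_neg (by omega), if_pos rfl]
        · have hv1 : ¬ ((p : ℕ) = j) := fun hcon => hpj (Fin.ext hcon)
          have hv2 : ¬ ((p : ℕ) = j + 1) := fun hcon => hpj1 (Fin.ext hcon)
          rw [hσ, Equiv.swap_apply_of_ne_of_ne hpj hpj1, if_neg hv1, if_neg hv2]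
    -- induction + swap inequality
    have hrec := ih (invLen ((e * d⁻¹) * σ)) (by omega) d₁ t₁ (by rw [hcσ]) hpre' ht₁type ht₁w
    intro i
    refine le_trans (hrec i) ?_
    have hgs := goodCounts_swap A Bl a b haltb i
    rw [hsplit] at hgs
    exact hgs
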